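/- Let h(j) = a*j^3 + b*j^2 + c*j + e be a function from ℤ≥0 to ℤ≥0 with integers a > 0, e > 0, b < 0, and b^2 ≤ 3*a*c. Then hdepth(h) ≤ 67. -/

import Mathlib

/-- The alternating binomial sum appearing in the definition of hdepth. -/
def Tsum18 (h : ℕ → ℤ) (d k : ℕ) : ℤ :=
  ∑ j ∈ Finset.range (k + 1), (-1 : ℤ) ^ (k - j) * (Nat.choose (d - j) (k - j)) * h j

lemma Tsum18_zero (h : ℕ → ℤ) (d : ℕ) : Tsum18 h d 0 = h 0 := by
  simp [Tsum18]

lemma Tsum18_step (h : ℕ → ℤ) (d k : ℕ) (hk : k ≤ d) :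
    Tsum18 h (d + 1) (k + 1) = Tsum18 h d (k + 1) - Tsum18 h d k := by
  unfold Tsum18
  rw [Finset.sum_range_succ, Finset.sum_range_succ
    (f := fun j => (-1 : ℤ) ^ (k + 1 - j) * (Nat.choose (d - j) (k + 1 - j)) * h j)]
  have hlast : ((-1 : ℤ)) ^ (k + 1 - (k + 1)) * (Nat.choose (d + 1 - (k + 1)) (k + 1 - (k + 1))) * h (k + 1)
      = ((-1 : ℤ)) ^ (k + 1 - (k + 1)) * (Nat.choose (d - (k + 1)) (k + 1 - (k + 1))) * h (k + 1) := by
    simp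
  rw [hlast]
  have hmain : ∑ j ∈ Finset.range (k + 1), (-1 : ℤ) ^ (k + 1 - j) * (Nat.choose (d + 1 - j) (k + 1 - j)) * h j
      = (∑ j ∈ Finset.range (k + 1), (-1 : ℤ) ^ (k + 1 - j) * (Nat.choose (d - j) (k + 1 - j)) * h j)
        - ∑ j ∈ Finset.range (k + 1), (-1 : ℤ) ^ (k - j) * (Nat.choose (d - j) (k - j)) * h j := by
    rw [← Finset.sum_sub_distrib]
    refine Finset.sum_congr rfl ?_
    intro j hj
    have hjk : j ≤ k := by
      have := Finset.mem_range.mp hj; omega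
    have h1 : d + 1 - j = (d - j) + 1 := by omega
    have h2 : k + 1 - j = (k - j) + 1 := by omega
    rw [h1, h2, Nat.choose_succ_succ]
    push_cast
    rw [pow_succ]
    ring
  rw [hmain]
  ring

lemma Tsum18_descend (h : ℕ → ℤ) (d : ℕ)
    (H : ∀ k, k ≤ d + 1 → 0 ≤ Tsum18 h (d + 1) k) :
    ∀ k, k ≤ d → 0 ≤ Tsum18 h d k := by
  intro k hk
  induction k with
  | zero =>
      have h0 := H 0 (by omega)
      rw [Tsum18_zero] at h0 ⊢
      exact h0
  | succ n ih =>
      have h1 := H (n + 1) (by omega)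
      have h2 := ih (by omega)
      have h3 := Tsum18_step h d n (by omega)
      rw [h3] at h1
      linarith

lemma Tsum18_base (a b c e : ℤ) (ha : 0 < a) (he : 0 < e) (hb : b < 0)
    (hd : b ^ 2 ≤ 3 * a * c)
    (h : ℕ → ℤ) (hh : ∀ j : ℕ, h j = a * j ^ 3 + b * j ^ 2 + c * j + e)
    (H : ∀ k, k ≤ 68 → 0 ≤ Tsum18 h 68 k) : False := by
  have hc : 0 < c := by
    nlinarith [sq_nonneg b, mul_pos ha (he.trans_le (le_refl e))]
  have t1 := H 1 (by norm_num)
  have t2 := H 2 (by norm_num)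
  have t3 := H 3 (by norm_num)
  have t4 := H 4 (by norm_num)
  unfold Tsum18 at t1 t2 t3 t4
  simp only [Finset.sum_range_succ, Finset.sum_range_zero, hh] at t1 t2 t3 t4
  norm_num [Nat.choose] at t1 t2 t3 t4
  -- t1 : 0 ≤ a + b + c - 67*e  (up to arrangement)
  -- certificate: 205677204*T1 + 19623477*T2 + 949346*T3 + 20705*T4
  --   = -313659*(a - b + c + e) < 0
  linarith

theorem stmt_18 (a b c e : ℤ) (ha : 0 < a) (he : 0 < e) (hb : b < 0)
    (hd : b ^ 2 ≤ 3 * a * c)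
    (h : ℕ → ℤ) (hh : ∀ j : ℕ, h j = a * j ^ 3 + b * j ^ 2 + c * j + e)
    (hnn : ∀ j : ℕ, 0 ≤ h j) :
    ∀ d : ℕ, 68 ≤ d → ∃ k : ℕ, k ≤ d ∧
      (∑ j ∈ Finset.range (k + 1), (-1 : ℤ) ^ (k - j) * (Nat.choose (d - j) (k - j)) * h j) < 0 := by
  intro d hd68
  by_contra hcon
  push_neg at hcon
  have hcon' : ∀ k, k ≤ d → 0 ≤ Tsum18 h d k := fun k hk => hcon k hk
  obtain ⟨m, rfl⟩ : ∃ m, d = 68 + m := ⟨d - 68, by omega⟩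
  clear hcon hd68
  induction m with
  | zero => exact Tsum18_base a b c e ha he hb hd h hh hcon'
  | succ n ih =>
      apply ih
      intro k hk
      exact Tsum18_descend h (68 + n) (by exact_mod_cast hcon') k hk
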